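/- Let l > 0, l₀ ∈ (0, l) with l₀/l rational, and let E, I, ρ > 0. Define Φ₀ : ℝ → ℝ by Φ₀(μ) = 2·sin(μ(l−l₀))·sin(μl₀) − sin(μl). Let μ : ℕ → ℝ be a strictly increasing function whose range is exactly the set {x ∈ [0, ∞) : Φ₀(x) = 0}, and assume all these roots are simple, i.e. the derivative Φ₀′(μ_j) ≠ 0 for every j. Set λ_j = i·√(EI/ρ)·μ_j² ∈ ℂ. Then there exists τ > 0 such that the system of functions {t ↦ exp(λ_j t)}_{j∈ℕ} is minimal in L²((0, τ), ℂ): for every j ∈ ℕ, the equivalence class of t ↦ exp(λ_j t) in L²((0, τ), ℂ) does not belong to the closure of the linear span of the equivalence classes of {t ↦ exp(λ_i t) : i ∈ ℕ, i ≠ j}. -/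

import Mathlib

open MeasureTheory Finset
open scoped ComplexConjugate

local notation "⟪" x ", " y "⟫" => inner (𝕜 := ℂ) x y

lemma aux_sum_inv_sq (F : Finset ℕ) : ∑ k ∈ F, (1:ℝ)/((k:ℝ)+1)^2 ≤ 2 := by
  classical
  have hsub : F ⊆ Finset.range (F.sup id + 1) := fun k hk =>
    Finset.mem_range.2 (Nat.lt_succ_of_le (Finset.le_sup (f := id) hk))
  have h1 : ∑ k ∈ F, (1:ℝ)/((k:ℝ)+1)^2 ≤ ∑ k ∈ Finset.range (F.sup id + 1), (1:ℝ)/((k:ℝ)+1)^2 :=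
    Finset.sum_le_sum_of_subset_of_nonneg hsub (fun i _ _ => by positivity)
  refine h1.trans ?_
  have key : ∀ K : ℕ, 1 ≤ K → ∑ k ∈ Finset.range K, (1:ℝ)/((k:ℝ)+1)^2 ≤ 2 - 1/(K:ℝ) := by
    intro K hK
    induction K with
    | zero => omega
    | succ n ih =>
      rcases Nat.eq_or_lt_of_le hK with h1 | h2
      · simp [← h1]; norm_num
      · have hn : 1 ≤ n := by omega
        have ihn := ih hn
        rw [Finset.sum_range_succ]
        have hnR : (1:ℝ) ≤ (n:ℝ) := by exact_mod_cast hn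
        have h3 : (1:ℝ)/((n:ℝ)+1)^2 ≤ 1/(n:ℝ) - 1/((n:ℝ)+1) := by
          rw [div_sub_div _ _ (by linarith) (by linarith)]
          rw [div_le_div_iff₀ (by positivity) (by positivity)]
          ring_nf
          nlinarith
        push_cast
        linarith
  refine (key _ (by omega)).trans ?_
  have : (0:ℝ) ≤ 1/((F.sup id + 1 : ℕ):ℝ) := by positivity
  linarith

lemma aux_row_sum {ω : ℕ → ℝ} {A : ℝ} (hA : 0 < A)
    (hsep : ∀ m n : ℕ, m < n → A * (n:ℝ) * ((n:ℝ) - (m:ℝ)) ≤ ω n - ω m)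
    (n : ℕ) (F : Finset ℕ) : ∑ m ∈ F.erase n, 2/|ω n - ω m| ≤ 6/A := by
  classical
  set F' := F.erase n with hF'
  have hmem : ∀ m ∈ F', m ≠ n := fun m hm => Finset.ne_of_mem_erase hm
  have hsplit : F' = F'.filter (· < n) ∪ F'.filter (n < ·) := by
    ext m
    simp only [Finset.mem_union, Finset.mem_filter]
    constructor
    · intro hm
      have := hmem m hm
      rcases lt_or_gt_of_ne this with h | h
      · exact Or.inl ⟨hm, h⟩
      · exact Or.inr ⟨hm, h⟩
    · rintro (⟨hm, _⟩ | ⟨hm, _⟩) <;> exact hm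
  have hdisj : Disjoint (F'.filter (· < n)) (F'.filter (n < ·)) := by
    apply Finset.disjoint_filter_filter'
    simp only [disjoint_iff_inf_le]
    intro m hm
    simp only [Pi.inf_apply, inf_Prop_eq] at hm
    exact absurd (lt_trans hm.1 hm.2) (lt_irrefl m)
  rw [hsplit, Finset.sum_union hdisj]
  -- positivity of differences
  have hpos : ∀ m k : ℕ, m < k → 0 < ω k - ω m := by
    intro m k hmk
    have := hsep m k hmk
    have h1 : (0:ℝ) < A * (k:ℝ) * ((k:ℝ) - (m:ℝ)) := by
      have hk : (0:ℝ) < (k:ℝ) := by exact_mod_cast lt_of_le_of_lt (Nat.zero_le m) hmk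
      have : (m:ℝ) < (k:ℝ) := by exact_mod_cast hmk
      have := sub_pos.2 this
      positivity
    linarith
  have hlow : ∑ m ∈ F'.filter (· < n), 2/|ω n - ω m| ≤ 2/A := by
    rcases Nat.eq_zero_or_pos n with rfl | hn
    · have : F'.filter (· < 0) = ∅ := by
        apply Finset.filter_false_of_mem; intro m _; omega
      rw [this]; simp; positivity
    · have hterm : ∀ m ∈ F'.filter (· < n), 2/|ω n - ω m| ≤ 2/(A * n) := by
        intro m hm
        have hmn : m < n := (Finset.mem_filter.1 hm).2
        have hp := hpos m n hmn
        rw [abs_of_pos hp]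
        have h1 : A * (n:ℝ) * 1 ≤ A * (n:ℝ) * ((n:ℝ) - (m:ℝ)) := by
          apply mul_le_mul_of_nonneg_left
          · have : (m:ℝ) + 1 ≤ (n:ℝ) := by exact_mod_cast hmn
            linarith
          · have : (0:ℝ) ≤ (n:ℝ) := Nat.cast_nonneg n
            positivity
        have h2 : A * (n:ℝ) ≤ ω n - ω m := by
          have := hsep m n hmn; linarith
        apply div_le_div_of_nonneg_left (by norm_num) (by positivity) h2
      calc ∑ m ∈ F'.filter (· < n), 2/|ω n - ω m|
          ≤ ∑ _m ∈ F'.filter (· < n), 2/(A * n) := Finset.sum_le_sum hterm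
        _ = ((F'.filter (· < n)).card : ℝ) * (2/(A*n)) := by
            rw [Finset.sum_const, nsmul_eq_mul]
        _ ≤ (n:ℝ) * (2/(A*n)) := by
            apply mul_le_mul_of_nonneg_right
            · have : (F'.filter (· < n)) ⊆ Finset.range n := by
                intro m hm
                exact Finset.mem_range.2 (Finset.mem_filter.1 hm).2
              have := Finset.card_le_card this
              have h2 := this.trans (Finset.card_range n).le
              exact_mod_cast h2
            · positivity
        _ = 2/A := by
            have hn' : (n:ℝ) ≠ 0 := by positivity
            field_simp
  have hhigh : ∑ m ∈ F'.filter (n < ·), 2/|ω n - ω m| ≤ 4/A := by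
    have hterm : ∀ m ∈ F'.filter (n < ·),
        2/|ω n - ω m| ≤ (2/A) * (1/(((m - n - 1 : ℕ):ℝ)+1)^2) := by
      intro m hm
      have hnm : n < m := (Finset.mem_filter.1 hm).2
      have hp := hpos n m hnm
      rw [abs_sub_comm, abs_of_pos hp]
      have hcast : ((m - n - 1 : ℕ):ℝ) + 1 = (m:ℝ) - (n:ℝ) := by
        have : m - n - 1 + 1 = m - n := by omega
        have h2 : ((m - n:ℕ):ℝ) = (m:ℝ) - (n:ℝ) := by
          push_cast [Nat.cast_sub hnm.le]; ring
        rw [← h2, ← this]; push_cast; ring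
      rw [hcast]
      have hmn1 : (1:ℝ) ≤ (m:ℝ) - (n:ℝ) := by
        have : n + 1 ≤ m := hnm
        have := (Nat.cast_le (α := ℝ)).2 this
        push_cast at this; linarith
      have h1 : A * ((m:ℝ) - (n:ℝ))^2 ≤ A * (m:ℝ) * ((m:ℝ) - (n:ℝ)) := by
        have hm0 : ((m:ℝ) - (n:ℝ)) ≤ (m:ℝ) := by
          have : (0:ℝ) ≤ (n:ℝ) := Nat.cast_nonneg n
          linarith
        have h0 : (0:ℝ) ≤ (m:ℝ) - (n:ℝ) := by linarith
        have hmul := mul_le_mul_of_nonneg_right hm0 h0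
        nlinarith
      have h2 := hsep n m hnm
      have h3 : A * ((m:ℝ) - (n:ℝ))^2 ≤ ω m - ω n := by linarith
      have h4 : (0:ℝ) < A * ((m:ℝ)-(n:ℝ))^2 := by positivity
      calc 2/(ω m - ω n) ≤ 2/(A * ((m:ℝ)-(n:ℝ))^2) :=
            div_le_div_of_nonneg_left (by norm_num) h4 h3
        _ = (2/A) * (1/(((m:ℝ)-(n:ℝ))^2)) := by field_simp
    calc ∑ m ∈ F'.filter (n < ·), 2/|ω n - ω m|
        ≤ ∑ m ∈ F'.filter (n < ·), (2/A) * (1/(((m - n - 1 : ℕ):ℝ)+1)^2) :=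
          Finset.sum_le_sum hterm
      _ = (2/A) * ∑ m ∈ F'.filter (n < ·), (1/(((m - n - 1 : ℕ):ℝ)+1)^2) := by
          rw [Finset.mul_sum]
      _ = (2/A) * ∑ k ∈ (F'.filter (n < ·)).image (· - n - 1), (1/((k:ℝ)+1)^2) := by
          congr 1
          rw [Finset.sum_image]
          intro a ha b hb hab
          have hna : n < a := (Finset.mem_filter.1 ha).2
          have hnb : n < b := (Finset.mem_filter.1 hb).2
          simp only at hab
          omega
      _ ≤ (2/A) * 2 := by
          apply mul_le_mul_of_nonneg_left (aux_sum_inv_sq _) (by positivity)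
      _ = 4/A := by ring
  have hfin : 2/A + 4/A = 6/A := by field_simp; ring
  linarith

lemma aux_swap_erase {M : Type*} [AddCommMonoid M] (s : Finset ℕ) (f : ℕ → ℕ → M) :
    ∑ n ∈ s, ∑ m ∈ s.erase n, f n m = ∑ n ∈ s, ∑ m ∈ s.erase n, f m n := by
  classical
  have h1 : ∀ (g : ℕ → ℕ → M), (∑ n ∈ s, ∑ m ∈ s.erase n, g n m)
      = ∑ n ∈ s, ∑ m ∈ s, if m ≠ n then g n m else 0 := by
    intro g
    refine Finset.sum_congr rfl fun n _ => ?_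
    rw [← Finset.filter_ne' s n, Finset.sum_filter]
  rw [h1 f, h1 (fun n m => f m n), Finset.sum_comm]
  refine Finset.sum_congr rfl fun n _ => Finset.sum_congr rfl fun m _ => ?_
  by_cases h : n = m <;> simp [h, ne_comm]

lemma aux_gram {H : Type*} [NormedAddCommGroup H] [InnerProductSpace ℂ H]
    (v : ℕ → H) (τ S : ℝ)
    (hdiag : ∀ n, ⟪v n, v n⟫ = (τ:ℂ))
    (hoff : ∀ (n : ℕ) (F : Finset ℕ), ∑ m ∈ F.erase n, ‖⟪v n, v m⟫‖ ≤ S)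
    (hτ : S + 1 ≤ τ) (d : ℕ →₀ ℂ) :
    ∑ i ∈ d.support, ‖d i‖^2 ≤ ‖d.sum fun i c => c • v i‖^2 := by
  classical
  set s := d.support with hs
  set h : H := d.sum fun i c => c • v i with hh
  have hh' : h = ∑ i ∈ s, d i • v i := rfl
  have hnorm : ‖h‖^2 = RCLike.re ⟪h, h⟫ := (inner_self_eq_norm_sq h).symm
  have hexp : ⟪h, h⟫ = ∑ n ∈ s, ∑ m ∈ s, conj (d n) * (d m * ⟪v n, v m⟫) := by
    rw [hh', sum_inner]
    refine Finset.sum_congr rfl fun n _ => ?_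
    rw [inner_smul_left, inner_sum]
    rw [Finset.mul_sum]
    refine Finset.sum_congr rfl fun m _ => ?_
    rw [inner_smul_right]
  have hre : RCLike.re ⟪h, h⟫
      = ∑ n ∈ s, ∑ m ∈ s, (conj (d n) * (d m * ⟪v n, v m⟫)).re := by
    rw [hexp]
    simp [RCLike.re_to_complex, Complex.re_sum]
  -- split diagonal
  have hsplit : ∀ n ∈ s, ∑ m ∈ s, (conj (d n) * (d m * ⟪v n, v m⟫)).re
      = ‖d n‖^2 * τ + ∑ m ∈ s.erase n, (conj (d n) * (d m * ⟪v n, v m⟫)).re := by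
    intro n hn
    rw [← Finset.add_sum_erase s _ hn]
    congr 1
    rw [hdiag n, ← mul_assoc, RCLike.conj_mul]
    have h9 : ((‖d n‖:ℂ))^2 * (τ:ℂ) = ((‖d n‖^2*τ : ℝ):ℂ) := by push_cast; ring
    show ((((‖d n‖:ℝ):ℂ))^2 * ((τ:ℝ):ℂ)).re = ‖d n‖^2 * τ
    rw [h9, Complex.ofReal_re]
  have hoffbd : ∀ n ∈ s, ∀ m ∈ s.erase n,
      -(‖d n‖ * (‖d m‖ * ‖⟪v n, v m⟫‖)) ≤ (conj (d n) * (d m * ⟪v n, v m⟫)).re := by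
    intro n _ m _
    have h1 : |(conj (d n) * (d m * ⟪v n, v m⟫)).re| ≤ ‖conj (d n) * (d m * ⟪v n, v m⟫)‖ :=
      Complex.abs_re_le_norm _
    have h2 : ‖conj (d n) * (d m * ⟪v n, v m⟫)‖ = ‖d n‖ * (‖d m‖ * ‖⟪v n, v m⟫‖) := by
      rw [norm_mul, norm_mul, RCLike.norm_conj]
    rw [h2] at h1
    have := neg_abs_le (conj (d n) * (d m * ⟪v n, v m⟫)).re
    linarith [abs_le.1 h1]
  -- lower bound for re inner
  have hlow : (∑ n ∈ s, (‖d n‖^2 * τ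
        - ∑ m ∈ s.erase n, ‖d n‖ * (‖d m‖ * ‖⟪v n, v m⟫‖)))
      ≤ RCLike.re ⟪h, h⟫ := by
    rw [hre]
    refine Finset.sum_le_sum fun n hn => ?_
    rw [hsplit n hn]
    have : -(∑ m ∈ s.erase n, ‖d n‖ * (‖d m‖ * ‖⟪v n, v m⟫‖))
        ≤ ∑ m ∈ s.erase n, (conj (d n) * (d m * ⟪v n, v m⟫)).re := by
      rw [← Finset.sum_neg_distrib]
      exact Finset.sum_le_sum (hoffbd n hn)
    linarith
  -- bound the double sum
  have hdouble : ∑ n ∈ s, ∑ m ∈ s.erase n, ‖d n‖ * (‖d m‖ * ‖⟪v n, v m⟫‖)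
      ≤ S * ∑ n ∈ s, ‖d n‖^2 := by
    have hAM : ∀ n ∈ s, ∀ m ∈ s.erase n, ‖d n‖ * (‖d m‖ * ‖⟪v n, v m⟫‖)
        ≤ (‖d n‖^2 * ‖⟪v n, v m⟫‖ + ‖d m‖^2 * ‖⟪v n, v m⟫‖)/2 := by
      intro n _ m _
      have h0 : (0:ℝ) ≤ ‖⟪v n, v m⟫‖ := norm_nonneg _
      nlinarith [sq_nonneg (‖d n‖ - ‖d m‖), norm_nonneg (d n), norm_nonneg (d m)]
    have step1 : ∑ n ∈ s, ∑ m ∈ s.erase n, ‖d n‖ * (‖d m‖ * ‖⟪v n, v m⟫‖)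
        ≤ ∑ n ∈ s, ∑ m ∈ s.erase n,
            (‖d n‖^2 * ‖⟪v n, v m⟫‖ + ‖d m‖^2 * ‖⟪v n, v m⟫‖)/2 :=
      Finset.sum_le_sum fun n hn => Finset.sum_le_sum (hAM n hn)
    have hsym : ∀ n m : ℕ, ‖⟪v n, v m⟫‖ = ‖⟪v m, v n⟫‖ := by
      intro n m
      rw [← inner_conj_symm (v n) (v m), RCLike.norm_conj]
    have step2 : ∑ n ∈ s, ∑ m ∈ s.erase n, ‖d m‖^2 * ‖⟪v n, v m⟫‖
        = ∑ n ∈ s, ∑ m ∈ s.erase n, ‖d n‖^2 * ‖⟪v n, v m⟫‖ := by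
      rw [aux_swap_erase s (fun n m => ‖d m‖^2 * ‖⟪v n, v m⟫‖)]
      exact Finset.sum_congr rfl fun n _ => Finset.sum_congr rfl fun m _ => by
        rw [hsym m n]
    have step3 : ∑ n ∈ s, ∑ m ∈ s.erase n, ‖d n‖^2 * ‖⟪v n, v m⟫‖
        ≤ ∑ n ∈ s, ‖d n‖^2 * S := by
      refine Finset.sum_le_sum fun n _ => ?_
      rw [← Finset.mul_sum]
      exact mul_le_mul_of_nonneg_left (hoff n s) (by positivity)
    calc ∑ n ∈ s, ∑ m ∈ s.erase n, ‖d n‖ * (‖d m‖ * ‖⟪v n, v m⟫‖)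
        ≤ ∑ n ∈ s, ∑ m ∈ s.erase n,
            (‖d n‖^2 * ‖⟪v n, v m⟫‖ + ‖d m‖^2 * ‖⟪v n, v m⟫‖)/2 := step1
      _ = (∑ n ∈ s, ∑ m ∈ s.erase n, ‖d n‖^2 * ‖⟪v n, v m⟫‖
            + ∑ n ∈ s, ∑ m ∈ s.erase n, ‖d m‖^2 * ‖⟪v n, v m⟫‖)/2 := by
          rw [← Finset.sum_add_distrib]
          rw [Finset.sum_div]
          refine Finset.sum_congr rfl fun n _ => ?_
          rw [← Finset.sum_add_distrib, Finset.sum_div]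
      _ = ∑ n ∈ s, ∑ m ∈ s.erase n, ‖d n‖^2 * ‖⟪v n, v m⟫‖ := by
          rw [step2]; ring
      _ ≤ ∑ n ∈ s, ‖d n‖^2 * S := step3
      _ = S * ∑ n ∈ s, ‖d n‖^2 := by rw [Finset.mul_sum]; exact Finset.sum_congr rfl fun n _ => by ring
  -- combine
  have hsum0 : (0:ℝ) ≤ ∑ n ∈ s, ‖d n‖^2 := Finset.sum_nonneg fun n _ => by positivity
  have hkey : ∑ n ∈ s, ‖d n‖^2 ≤ RCLike.re ⟪h, h⟫ := by
    have e1 : ∑ n ∈ s, (‖d n‖^2 * τ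
          - ∑ m ∈ s.erase n, ‖d n‖ * (‖d m‖ * ‖⟪v n, v m⟫‖))
        = τ * (∑ n ∈ s, ‖d n‖^2)
          - ∑ n ∈ s, ∑ m ∈ s.erase n, ‖d n‖ * (‖d m‖ * ‖⟪v n, v m⟫‖) := by
      rw [Finset.sum_sub_distrib, Finset.mul_sum]
      congr 1
      exact Finset.sum_congr rfl fun n _ => by ring
    have : τ * (∑ n ∈ s, ‖d n‖^2) - S * (∑ n ∈ s, ‖d n‖^2) ≥ ∑ n ∈ s, ‖d n‖^2 := by
      nlinarith
    linarith [hlow, hdouble, e1 ▸ hlow]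
  rw [hnorm]
  exact hkey

theorem exponential_system_minimal_in_L2
    (l l₀ : ℝ) (hl : 0 < l) (hl₀ : 0 < l₀) (hll : l₀ < l)
    (hrat : ∃ q : ℚ, l₀ / l = (q : ℝ))
    (E I ρ : ℝ) (hE : 0 < E) (hI : 0 < I) (hρ : 0 < ρ)
    (Φ₀ : ℝ → ℝ)
    (hΦ₀ : ∀ μ, Φ₀ μ = 2 * Real.sin (μ * (l - l₀)) * Real.sin (μ * l₀) - Real.sin (μ * l))
    (μ : ℕ → ℝ) (hmono : StrictMono μ)
    (hrange : Set.range μ = {x : ℝ | 0 ≤ x ∧ Φ₀ x = 0})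
    (hsimple : ∀ j : ℕ, deriv Φ₀ (μ j) ≠ 0)
    (lam : ℕ → ℂ)
    (hlam : ∀ j : ℕ, lam j = Complex.I * (Real.sqrt (E * I / ρ) : ℝ) * ((μ j : ℝ) ^ 2 : ℝ)) :
    ∃ τ > (0:ℝ), ∀ g : ℕ → Lp ℂ 2 (volume.restrict (Set.Ioo (0:ℝ) τ)),
      (∀ j : ℕ, (g j : ℝ → ℂ) =ᵐ[volume.restrict (Set.Ioo (0:ℝ) τ)]
          fun t : ℝ => Complex.exp (lam j * (t : ℂ))) →
      ∀ j : ℕ, (g j) ∉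
        closure ((Submodule.span ℂ {v : Lp ℂ 2 (volume.restrict (Set.Ioo (0:ℝ) τ)) |
          ∃ i : ℕ, i ≠ j ∧ v = g i} : Submodule ℂ _) : Set _) := by
  classical
  obtain ⟨q, hq⟩ := hrat
  -- basic constants
  set c : ℝ := Real.sqrt (E * I / ρ) with hc_def
  have hc : 0 < c := Real.sqrt_pos.2 (by positivity)
  -- the root set
  set R : Set ℝ := {x : ℝ | 0 ≤ x ∧ Φ₀ x = 0} with hR_def
  -- membership facts
  have hmemR : ∀ n, μ n ∈ R := by
    intro n
    rw [← hrange]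
    exact Set.mem_range_self n
  have hμ_nonneg : ∀ n, 0 ≤ μ n := fun n => (hmemR n).1
  have hΦμ : ∀ n, Φ₀ (μ n) = 0 := fun n => (hmemR n).2
  -- 0 is a root
  have hΦ0 : Φ₀ 0 = 0 := by rw [hΦ₀]; simp
  have h0R : (0:ℝ) ∈ R := ⟨le_refl 0, hΦ0⟩
  have hμ0 : μ 0 = 0 := by
    obtain ⟨k, hk⟩ := hrange ▸ h0R
    have h1 : μ 0 ≤ μ k := hmono.monotone (Nat.zero_le k)
    rw [hk] at h1
    exact le_antisymm h1 (hμ_nonneg 0)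
  -- period T
  set T : ℝ := 2 * Real.pi * (q.den : ℝ) / l with hT_def
  have hden : (0:ℝ) < (q.den : ℝ) := by exact_mod_cast q.pos
  have hT : 0 < T := by
    have := Real.pi_pos
    positivity
  -- q relation: (q.den : ℝ) * (q:ℝ) = (q.num : ℝ)
  have hkey : (q.den : ℝ) * (q : ℝ) = ((q.num : ℤ) : ℝ) := by
    rw [Rat.cast_def]
    field_simp
  have hTl₀ : T * l₀ = ((q.num : ℤ) : ℝ) * (2 * Real.pi) := by
    have h1 : T * l₀ = 2 * Real.pi * ((q.den : ℝ) * (l₀ / l)) := by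
      rw [hT_def]; field_simp
    rw [h1, hq, hkey]; ring
  have hTl : T * l = ((q.den : ℤ) : ℝ) * (2 * Real.pi) := by
    rw [hT_def]; field_simp; push_cast; ring
  have hTll₀ : T * (l - l₀) = (((q.den : ℤ) - q.num : ℤ) : ℝ) * (2 * Real.pi) := by
    push_cast
    push_cast at hTl hTl₀
    nlinarith [hTl, hTl₀]
  -- periodicity of Φ₀
  have hper : ∀ x : ℝ, Φ₀ (x + T) = Φ₀ x := by
    intro x
    rw [hΦ₀, hΦ₀]
    have s1 : Real.sin ((x + T) * (l - l₀)) = Real.sin (x * (l - l₀)) := by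
      have h : (x + T) * (l - l₀) = x * (l - l₀) + (((q.den : ℤ) - q.num : ℤ) : ℝ) * (2 * Real.pi) := by
        rw [← hTll₀]; ring
      rw [h, Real.sin_add_int_mul_two_pi]
    have s2 : Real.sin ((x + T) * l₀) = Real.sin (x * l₀) := by
      have h : (x + T) * l₀ = x * l₀ + ((q.num : ℤ) : ℝ) * (2 * Real.pi) := by
        rw [← hTl₀]; ring
      rw [h, Real.sin_add_int_mul_two_pi]
    have s3 : Real.sin ((x + T) * l) = Real.sin (x * l) := by
      have h : (x + T) * l = x * l + ((q.den : ℤ) : ℝ) * (2 * Real.pi) := by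
        rw [← hTl]; ring
      rw [h, Real.sin_add_int_mul_two_pi]
    rw [s1, s2, s3]
  -- T is attained: ∃ n, T ≤ μ n
  have hTR : T ∈ R := by
    have := hper 0
    rw [zero_add, hΦ0] at this
    exact ⟨hT.le, this⟩
  have hex : ∃ n, T ≤ μ n := by
    obtain ⟨k, hk⟩ := hrange ▸ hTR
    exact ⟨k, hk.ge⟩
  set N : ℕ := Nat.find hex with hN_def
  have hN_spec : T ≤ μ N := Nat.find_spec hex
  have hN_min : ∀ m, m < N → μ m < T := by
    intro m hm
    have := Nat.find_min hex hm
    linarith [not_le.1 this]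
  have hN1 : 1 ≤ N := by
    rcases Nat.eq_zero_or_pos N with h | h
    · exfalso
      have := hN_spec
      rw [h, hμ0] at this
      linarith
    · exact h
  -- the shift identity μ (n + N) = μ n + T
  have hshift : ∀ n, μ (n + N) = μ n + T := by
    have hf : StrictMono (fun n => μ (n + N)) := fun a b hab => hmono (by omega)
    have hg : StrictMono (fun n => μ n + T) := fun a b hab => by
      simp only [add_lt_add_iff_right]
      exact hmono hab
    have hrangeseq : Set.range (fun n => μ (n + N)) = Set.range (fun n => μ n + T) := by
      ext y
      simp only [Set.mem_range]
      constructor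
      · rintro ⟨n, rfl⟩
        -- μ (n+N) ∈ R and T ≤ μ (n+N); show μ(n+N) - T ∈ R
        have h1 : T ≤ μ (n + N) := le_trans hN_spec (hmono.monotone (by omega))
        have h2 : μ (n + N) ∈ R := hmemR _
        have h3 : μ (n + N) - T ∈ R := by
          constructor
          · linarith
          · have hpe := hper (μ (n + N) - T)
            rw [sub_add_cancel] at hpe
            rw [← hpe]
            exact h2.2
        obtain ⟨k, hk⟩ := hrange ▸ h3
        exact ⟨k, by rw [hk]; ring⟩
      · rintro ⟨n, rfl⟩
        have h1 : μ n + T ∈ R := by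
          constructor
          · have := hμ_nonneg n; linarith
          · rw [hper (μ n)]; exact hΦμ n
        obtain ⟨k, hk⟩ := hrange ▸ h1
        have hkN : N ≤ k := by
          by_contra hcon
          push_neg at hcon
          have := hN_min k hcon
          have h2 : T ≤ μ k := by rw [hk]; linarith [hμ_nonneg n]
          linarith
        exact ⟨k - N, by rw [Nat.sub_add_cancel hkN, hk]⟩
    have := (StrictMono.range_inj hf hg).1 hrangeseq
    intro n
    exact congrFun this n
  -- minimal gap δ
  have hNE : (Finset.range N).Nonempty := ⟨0, Finset.mem_range.2 hN1⟩
  set δ : ℝ := (Finset.range N).inf' hNE (fun n => μ (n+1) - μ n) with hδ_def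
  have hδpos : 0 < δ := by
    rw [hδ_def, Finset.lt_inf'_iff]
    intro b _
    have := hmono (Nat.lt_succ_self b)
    linarith
  have hgap : ∀ n, δ ≤ μ (n+1) - μ n := by
    intro n
    induction n using Nat.strong_induction_on with
    | _ n ih =>
      by_cases h : n < N
      · exact Finset.inf'_le _ (Finset.mem_range.2 h)
      · push_neg at h
        have h1 : n - N + N = n := Nat.sub_add_cancel h
        have h2 : n - N + 1 + N = n + 1 := by omega
        have h3 := ih (n - N) (by omega)
        calc δ ≤ μ (n-N+1) - μ (n-N) := h3
          _ = (μ (n-N+1) + T) - (μ (n-N) + T) := by ring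
          _ = μ (n-N+1+N) - μ (n-N+N) := by rw [hshift, hshift]
          _ = μ (n+1) - μ n := by rw [h2, h1]
  clear hN_def hδ_def
  clear_value N δ
  -- separation and growth
  have hsep : ∀ m n : ℕ, m < n → δ * ((n:ℝ) - (m:ℝ)) ≤ μ n - μ m := by
    intro m n h
    induction n, h using Nat.le_induction with
    | base =>
      have := hgap m
      push_cast
      simp only [add_sub_cancel_left]
      linarith
    | succ n hmn ih =>
      have h1 := hgap n
      push_cast
      push_cast at ih
      linarith
  have hgrow : ∀ n : ℕ, δ * (n:ℝ) ≤ μ n := by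
    intro n
    rcases Nat.eq_zero_or_pos n with rfl | h
    · simp [hμ0]
    · have := hsep 0 n h
      rw [hμ0] at this
      push_cast at this ⊢
      linarith
  -- frequencies
  set ω : ℕ → ℝ := fun n => c * (μ n)^2 with hω_def
  set A : ℝ := c * δ^2 with hA_def
  have hA : 0 < A := by positivity
  have hsepω : ∀ m n : ℕ, m < n → A * (n:ℝ) * ((n:ℝ) - (m:ℝ)) ≤ ω n - ω m := by
    intro m n h
    have h1 : δ * ((n:ℝ) - (m:ℝ)) ≤ μ n - μ m := hsep m n h
    have h2 : δ * (n:ℝ) ≤ μ n := hgrow n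
    have h3 : 0 ≤ μ m := hμ_nonneg m
    have h4 : (m:ℝ) < (n:ℝ) := by exact_mod_cast h
    have h5 : ω n - ω m = c * ((μ n - μ m) * (μ n + μ m)) := by
      rw [hω_def]; ring
    rw [h5, hA_def]
    have h6 : 0 ≤ δ * ((n:ℝ) - (m:ℝ)) := mul_nonneg hδpos.le (by linarith)
    have h7 : 0 ≤ δ * (n:ℝ) := mul_nonneg hδpos.le (Nat.cast_nonneg n)
    have h8 : δ * ((n:ℝ) - (m:ℝ)) * (δ * (n:ℝ)) ≤ (μ n - μ m) * (μ n + μ m) :=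
      mul_le_mul h1 (le_trans h2 (by linarith)) h7 (by linarith)
    calc c * δ^2 * (n:ℝ) * ((n:ℝ) - (m:ℝ)) = c * (δ * ((n:ℝ) - (m:ℝ)) * (δ * (n:ℝ))) := by ring
      _ ≤ c * ((μ n - μ m) * (μ n + μ m)) := by
          exact mul_le_mul_of_nonneg_left h8 hc.le
  set S : ℝ := 6 / A with hS_def
  have hrow : ∀ (n : ℕ) (F : Finset ℕ), ∑ m ∈ F.erase n, 2/|ω n - ω m| ≤ S :=
    fun n F => aux_row_sum hA hsepω n F
  have hS0 : 0 < S := by rw [hS_def]; positivity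
  set τ : ℝ := S + 1 with hτ_def
  have hτpos : 0 < τ := by linarith
  refine ⟨τ, hτpos, ?_⟩
  intro g hg j
  -- lam in terms of ω
  have hlamω : ∀ n, lam n = Complex.I * ((ω n : ℝ) : ℂ) := by
    intro n
    rw [hlam n, hω_def]
    push_cast
    ring
  -- inner products
  have hinner : ∀ n m : ℕ, ⟪g n, g m⟫
      = ∫ t in Set.Ioo (0:ℝ) τ, Complex.exp ((lam m - lam n) * (t:ℂ)) := by
    intro n m
    rw [MeasureTheory.L2.inner_def]
    have hae : (fun a => ⟪(g n) a, (g m) a⟫)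
        =ᵐ[volume.restrict (Set.Ioo (0:ℝ) τ)]
        (fun t : ℝ => Complex.exp ((lam m - lam n) * (t:ℂ))) := by
      filter_upwards [hg n, hg m] with t h1 h2
      rw [RCLike.inner_apply, h1, h2]
      rw [← Complex.exp_conj]
      rw [← Complex.exp_add]
      congr 1
      have hconj : conj (lam n * (t:ℂ)) = -(lam n * (t:ℂ)) := by
        rw [hlamω n]
        simp [map_mul, Complex.conj_I, Complex.conj_ofReal]
      rw [hconj]
      ring
    rw [integral_congr_ae hae]
  -- diagonal
  have hdiagG : ∀ n, ⟪g n, g n⟫ = (τ : ℂ) := by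
    intro n
    rw [hinner n n]
    simp only [sub_self, zero_mul, Complex.exp_zero]
    rw [MeasureTheory.setIntegral_const]
    rw [Measure.real, Real.volume_Ioo, sub_zero, ENNReal.toReal_ofReal hτpos.le]
    simp
  -- off-diagonal
  have hμinj : ∀ n m : ℕ, n ≠ m → ω n ≠ ω m := by
    intro n m hnm
    have h1 : μ n ≠ μ m := fun h => hnm (hmono.injective h)
    have h2 : (μ n)^2 ≠ (μ m)^2 := by
      intro h
      apply h1
      have hs := congrArg Real.sqrt h
      rwa [Real.sqrt_sq (hμ_nonneg n), Real.sqrt_sq (hμ_nonneg m)] at hs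
    intro h
    apply h2
    simp only [hω_def] at h
    exact mul_left_cancel₀ hc.ne' h
  have hoffG : ∀ n m : ℕ, n ≠ m → ‖⟪g n, g m⟫‖ ≤ 2 / |ω n - ω m| := by
    intro n m hnm
    have ha : ω m - ω n ≠ 0 := sub_ne_zero.2 (hμinj m n (Ne.symm hnm))
    set a : ℝ := ω m - ω n with ha_def
    have hz : Complex.I * (a:ℂ) ≠ 0 :=
      mul_ne_zero Complex.I_ne_zero (by exact_mod_cast ha)
    have hlamdiff : lam m - lam n = Complex.I * (a:ℂ) := by
      rw [hlamω m, hlamω n, ha_def]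
      push_cast
      ring
    rw [hinner n m, hlamdiff]
    have hIoo : (∫ t in Set.Ioo (0:ℝ) τ, Complex.exp (Complex.I * (a:ℂ) * (t:ℂ)))
        = ∫ t in (0:ℝ)..τ, Complex.exp (Complex.I * (a:ℂ) * (t:ℂ)) := by
      rw [intervalIntegral.integral_of_le hτpos.le, MeasureTheory.integral_Ioc_eq_integral_Ioo]
    rw [hIoo, integral_exp_mul_complex hz]
    have hnorm1 : ∀ r : ℝ, ‖Complex.exp (Complex.I * (a:ℂ) * (r:ℂ))‖ = 1 := by
      intro r
      rw [Complex.norm_exp]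
      have : (Complex.I * (a:ℂ) * (r:ℂ)).re = 0 := by simp
      rw [this, Real.exp_zero]
    rw [norm_div]
    have hnum : ‖Complex.exp (Complex.I * (a:ℂ) * (τ:ℂ)) - Complex.exp (Complex.I * (a:ℂ) * ((0:ℝ):ℂ))‖ ≤ 2 := by
      calc ‖Complex.exp (Complex.I * (a:ℂ) * (τ:ℂ)) - Complex.exp (Complex.I * (a:ℂ) * ((0:ℝ):ℂ))‖
          ≤ ‖Complex.exp (Complex.I * (a:ℂ) * (τ:ℂ))‖ + ‖Complex.exp (Complex.I * (a:ℂ) * ((0:ℝ):ℂ))‖ :=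
            norm_sub_le _ _
        _ = 2 := by rw [hnorm1 τ, hnorm1 0]; norm_num
    have hden' : ‖Complex.I * (a:ℂ)‖ = |a| := by
      rw [norm_mul, Complex.norm_I, one_mul, Complex.norm_real, Real.norm_eq_abs]
    rw [hden']
    have habs : |a| = |ω n - ω m| := by rw [ha_def, abs_sub_comm]
    rw [habs]
    have hpos : 0 < |ω n - ω m| := abs_pos.2 (sub_ne_zero.2 (hμinj n m hnm))
    gcongr
  -- row sums of inner products
  have hoffRow : ∀ (n : ℕ) (F : Finset ℕ), ∑ m ∈ F.erase n, ‖⟪g n, g m⟫‖ ≤ S := by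
    intro n F
    calc ∑ m ∈ F.erase n, ‖⟪g n, g m⟫‖ ≤ ∑ m ∈ F.erase n, 2/|ω n - ω m| := by
          refine Finset.sum_le_sum fun m hm => ?_
          exact hoffG n m (Ne.symm (Finset.ne_of_mem_erase hm))
      _ ≤ S := hrow n F
  have hgram := aux_gram g τ S hdiagG hoffRow (by rw [hτ_def])
  -- conclusion
  intro hcl
  obtain ⟨b, hbmem, hbdist⟩ := Metric.mem_closure_iff.1 hcl 1 one_pos
  -- rewrite the set as an image
  have hset : {v : Lp ℂ 2 (volume.restrict (Set.Ioo (0:ℝ) τ)) | ∃ i : ℕ, i ≠ j ∧ v = g i}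
      = g '' {i : ℕ | i ≠ j} := by
    ext v
    constructor
    · rintro ⟨i, h1, h2⟩
      exact ⟨i, h1, h2.symm⟩
    · rintro ⟨i, h1, h2⟩
      exact ⟨i, h1, h2.symm⟩
  rw [hset] at hbmem
  obtain ⟨ll, hll_supp, hll_eq⟩ := (Finsupp.mem_span_image_iff_linearCombination ℂ).1 hbmem
  set d : ℕ →₀ ℂ := Finsupp.single j 1 - ll with hd_def
  have hllj : ll j = 0 := by
    rw [Finsupp.mem_supported'] at hll_supp
    exact hll_supp j (by simp)
  have hdj : d j = 1 := by
    rw [hd_def]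
    simp [hllj]
  have hdsum : (d.sum fun i c => c • g i) = g j - b := by
    rw [hd_def, Finsupp.sum_sub_index (fun i b₁ b₂ => sub_smul b₁ b₂ (g i))]
    rw [Finsupp.sum_single_index (zero_smul ℂ (g j)), one_smul]
    rw [← hll_eq, Finsupp.linearCombination_apply]
  have h1le : (1:ℝ) ≤ ∑ i ∈ d.support, ‖d i‖^2 := by
    have hjmem : j ∈ d.support := Finsupp.mem_support_iff.2 (by rw [hdj]; norm_num)
    have := Finset.single_le_sum (f := fun i => ‖d i‖^2)
      (fun i _ => by positivity) hjmem
    simpa [hdj] using this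
  have h2 : (1:ℝ) ≤ ‖g j - b‖^2 := by
    rw [← hdsum]
    exact le_trans h1le (hgram d)
  have h3 : ‖g j - b‖ < 1 := by
    rw [← dist_eq_norm]
    exact hbdist
  nlinarith [norm_nonneg (g j - b)]
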